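/- Let 0 < q < 1, λ > 0, and let g(z) := (λ/2 - |z|)^{q-1} for |z| < λ/2. There exists a constant a > 0 (depending only on q and λ) such that: for every non-increasing C¹ function G : [-λ/2, λ/2] → [0,1] with -G'(z) ≤ a·g(z) for all |z| < λ/2, the function V(G)(z) := exp(-∫_{-λ/2}^{λ/2} q·((z+t)_+)^{q-1}·G(t) dt) satisfies -(V(G))'(z) ≤ a·g(z) for all |z| < λ/2. -/

import Mathlib

open intervalIntegral

open MeasureTheory Set Filter Topology
open MeasureTheory Set Filter Topology intervalIntegral
open scoped Interval

lemma scale_rpow {q : ℝ} (hq0 : 0 < q) (hq1 : q < 1) {c m : ℝ} (hc : 1/2 ≤ c) (hc1 : c ≤ 1)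
    (hm : 0 ≤ m) : (c*m) ^ (q-1) ≤ 2 * m ^ (q-1) := by
  have hc0 : 0 < c := by linarith
  rw [Real.mul_rpow hc0.le hm]
  have h1 : c ^ (q-1) ≤ c ^ (-1 : ℝ) := Real.rpow_le_rpow_of_exponent_ge hc0 hc1 (by linarith)
  have h2 : c ^ (-1:ℝ) = c⁻¹ := by rw [Real.rpow_neg hc0.le, Real.rpow_one]
  have h3 : c⁻¹ ≤ 2 := by rw [inv_le_comm₀ hc0 (by norm_num)]; linarith
  have hm' : (0:ℝ) ≤ m ^ (q-1) := Real.rpow_nonneg hm _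
  nlinarith [Real.rpow_nonneg hc0.le (q-1)]

lemma int_qs {q : ℝ} (hq0 : 0 < q) (hq1 : q < 1) {α β : ℝ} (hα : 0 ≤ α) (hαβ : α ≤ β) :
    (∫ s in α..β, q * s ^ (q-1)) = β ^ q - α ^ q := by
  rw [intervalIntegral.integral_const_mul, integral_rpow (Or.inl (by linarith))]
  have : q - 1 + 1 = q := by ring
  rw [this]; field_simp

lemma int_qbs {q : ℝ} (hq0 : 0 < q) (hq1 : q < 1) {α β b : ℝ} (hα : 0 ≤ α) (hαβ : α ≤ β)
    (hβb : β ≤ b) :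
    (∫ s in α..β, q * (b - s) ^ (q-1)) = (b - α) ^ q - (b - β) ^ q := by
  have := intervalIntegral.integral_comp_sub_left (a := α) (b := β)
    (fun u : ℝ => q * u ^ (q-1)) b
  rw [this, int_qs hq0 hq1 (by linarith) (by linarith)]

lemma int_qbs_integrable {q : ℝ} (hq1 : q < 1) (hq0 : 0 < q) (b α β : ℝ) :
    IntervalIntegrable (fun s => q * (b - s) ^ (q-1)) volume α β := by
  have h1 : IntervalIntegrable (fun u : ℝ => q * u ^ (q-1)) volume (b - α) (b - β) :=
    (intervalIntegrable_rpow' (by linarith)).const_mul q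
  have := h1.comp_sub_left b
  simpa using this

lemma integ_master {q : ℝ} (hq0 : 0 < q) (hq1 : q < 1) (φ : ℝ → ℝ) {α β : ℝ}
    (hα : 0 ≤ α) (hαβ : α ≤ β)
    (hφm : AEStronglyMeasurable φ (volume.restrict (Ι α β)))
    (hφb : ∀ s ∈ Ι α β, |φ s| ≤ 1) :
    IntervalIntegrable (fun s => q * (max s 0) ^ (q-1) * φ s) volume α β := by
  have hint : IntervalIntegrable (fun s : ℝ => q * s ^ (q-1)) volume α β :=
    (intervalIntegrable_rpow' (by linarith)).const_mul q
  refine hint.mono_fun ?_ ?_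
  · have hm : Measurable fun s : ℝ => q * (max s 0) ^ (q-1) := by measurability
    exact hm.aestronglyMeasurable.mul hφm
  · rw [uIoc_of_le hαβ] at hφb ⊢
    filter_upwards [MeasureTheory.ae_restrict_mem measurableSet_Ioc] with s hs
    have hs0 : 0 < s := lt_of_le_of_lt hα hs.1
    have hmax : max s 0 = s := max_eq_left hs0.le
    have h1 : (0:ℝ) ≤ s ^ (q-1) := Real.rpow_nonneg hs0.le _
    simp only [norm_mul, Real.norm_eq_abs, hmax]
    calc |q| * |s ^ (q-1)| * |φ s| ≤ |q| * |s^(q-1)| * 1 := by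
          exact mul_le_mul_of_nonneg_left (hφb s ⟨hs.1, hs.2⟩) (by positivity)
      _ = |q * s^(q-1)| := by rw [mul_one, abs_mul]
      _ ≤ |q| * |s ^ (q-1)| := by rw [abs_mul]

lemma G_diff_bound {q lam a : ℝ} (hq1 : q < 1) (hlam : 0 < lam) (ha : 0 ≤ a) {G : ℝ → ℝ}
    (hG : ContDiffOn ℝ 1 G (Icc (-(lam/2)) (lam/2)))
    (hG' : ∀ z : ℝ, |z| < lam/2 → -(deriv G z) ≤ a * (lam/2 - |z|) ^ (q-1))
    {u h M : ℝ} (hh : 0 ≤ h) (hM : ∀ x ∈ Icc u (u+h), |x| ≤ M) (hM2 : M < lam/2) :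
    G u - G (u + h) ≤ a * h * (lam/2 - M) ^ (q-1) := by
  have huu : u ≤ u + h := by linarith
  have hM0 : 0 ≤ M := le_trans (abs_nonneg u) (hM u ⟨le_refl u, huu⟩)
  have hsub : Icc u (u+h) ⊆ Ioo (-(lam/2)) (lam/2) := by
    intro x hx
    have := abs_lt.mp (lt_of_le_of_lt (hM x hx) hM2)
    exact ⟨this.1, this.2⟩
  have hdiff : ∀ x ∈ Icc u (u+h), DifferentiableAt ℝ G x := by
    intro x hx
    obtain ⟨h1, h2⟩ := hsub hx
    have hmem : Icc (-(lam/2)) (lam/2) ∈ 𝓝 x := Icc_mem_nhds h1 h2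
    exact ((hG.differentiableOn one_ne_zero) x (Ioo_subset_Icc_self (hsub hx))).differentiableAt hmem
  have hcont : ContinuousOn (deriv G) (Ioo (-(lam/2)) (lam/2)) := by
    have h1 : ContinuousOn (derivWithin G (Icc (-(lam/2)) (lam/2))) (Icc (-(lam/2)) (lam/2)) :=
      hG.continuousOn_derivWithin (uniqueDiffOn_Icc (by linarith)) le_rfl
    refine (h1.mono Ioo_subset_Icc_self).congr ?_
    intro x hx
    exact (derivWithin_of_mem_nhds (Icc_mem_nhds hx.1 hx.2)).symm
  have hint : IntervalIntegrable (deriv G) volume u (u+h) := by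
    apply ContinuousOn.intervalIntegrable
    rw [uIcc_of_le huu]
    exact hcont.mono hsub
  have hftc : (∫ x in u..(u+h), deriv G x) = G (u+h) - G u := by
    apply integral_deriv_eq_sub _ hint
    intro x hx
    rw [uIcc_of_le huu] at hx
    exact hdiff x hx
  have hmono : (∫ x in u..(u+h), -(deriv G x)) ≤ ∫ _x in u..(u+h), a * (lam/2 - M) ^ (q-1) := by
    apply integral_mono_on huu hint.neg intervalIntegrable_const
    intro x hx
    have hx' : |x| < lam/2 := lt_of_le_of_lt (hM x hx) hM2
    calc -(deriv G x) ≤ a * (lam/2 - |x|) ^ (q-1) := hG' x hx'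
      _ ≤ a * (lam/2 - M) ^ (q-1) := by
          apply mul_le_mul_of_nonneg_left _ ha
          exact Real.rpow_le_rpow_of_nonpos (by linarith) (by have := hM x hx; linarith)
            (by linarith)
  rw [intervalIntegral.integral_neg, hftc, intervalIntegral.integral_const] at hmono
  have : u + h - u = h := by ring
  rw [this, smul_eq_mul] at hmono
  nlinarith []

lemma phi_aesm {lam : ℝ} {G : ℝ → ℝ}
    (hGc : ContinuousOn G (Icc (-(lam/2)) (lam/2))) {y α β : ℝ} (hαβ : α ≤ β)
    (hmaps : ∀ s ∈ Icc α β, s - y ∈ Icc (-(lam/2)) (lam/2)) :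
    AEStronglyMeasurable (fun s => G (s - y)) (volume.restrict (Ι α β)) := by
  have hcont : ContinuousOn (fun s => G (s - y)) (Icc α β) := by
    apply hGc.comp ((continuous_id.sub continuous_const).continuousOn)
    exact hmaps
  rw [uIoc_of_le hαβ]
  exact (hcont.mono Ioc_subset_Icc_self).aestronglyMeasurable measurableSet_Ioc

lemma W_repr {q lam : ℝ} (hq0 : 0 < q) (hq1 : q < 1) (hlam : 0 < lam) {G : ℝ → ℝ}
    (hGc : ContinuousOn G (Icc (-(lam/2)) (lam/2)))
    (hG01 : ∀ t ∈ Icc (-(lam/2)) (lam/2), G t ∈ Icc (0:ℝ) 1)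
    {y : ℝ} (hy : |y| < lam/2) :
    (∫ t in (-(lam/2))..(lam/2), q * (max (y + t) 0) ^ (q-1) * G t)
      = ∫ s in (0:ℝ)..(y + lam/2), q * (max s 0) ^ (q-1) * G (s - y) := by
  obtain ⟨hy1, hy2⟩ := abs_lt.mp hy
  set f : ℝ → ℝ := fun s => q * (max s 0) ^ (q-1) * G (s - y) with hf
  have e1 : (∫ t in (-(lam/2))..(lam/2), q * (max (y + t) 0) ^ (q-1) * G t)
      = ∫ s in (y + -(lam/2))..(y + lam/2), f s := by
    rw [← intervalIntegral.integral_comp_add_left f y]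
    congr 1
    funext t
    rw [hf]
    simp only [add_sub_cancel_left]
  have hyL : y + -(lam/2) ≤ 0 := by linarith
  have hyL2 : (0:ℝ) ≤ y + lam/2 := by linarith
  have hzero : EqOn f 0 (uIcc (y + -(lam/2)) 0) := by
    intro s hs
    rw [uIcc_of_le hyL] at hs
    have hs0 : s ≤ 0 := hs.2
    have : max s 0 = 0 := max_eq_right hs0
    simp [hf, this, Real.zero_rpow (by intro hc; linarith [hc] : q - 1 ≠ 0)]
  have hi1 : IntervalIntegrable f volume (y + -(lam/2)) 0 :=
    (continuousOn_const.congr hzero).intervalIntegrable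
  have hi2 : IntervalIntegrable f volume 0 (y + lam/2) := by
    apply integ_master hq0 hq1 _ le_rfl hyL2
    · exact phi_aesm hGc hyL2 (by
        intro s hs
        constructor <;> [linarith [hs.1]; linarith [hs.2] ])
    · intro s hs
      rw [uIoc_of_le hyL2] at hs
      have hmem : s - y ∈ Icc (-(lam/2)) (lam/2) := ⟨by linarith [hs.1], by linarith [hs.2]⟩
      have := hG01 _ hmem
      rw [abs_le]
      exact ⟨by linarith [this.1], this.2⟩
  have hsplit := integral_add_adjacent_intervals hi1 hi2
  have hz : (∫ s in (y + -(lam/2))..(0:ℝ), f s) = 0 := by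
    rw [intervalIntegral.integral_congr hzero]
    simp
  rw [e1, ← hsplit, hz, zero_add]

lemma tv_bound {lam : ℝ} (hlam : 0 < lam) {G : ℝ → ℝ}
    (hGc : ContinuousOn G (Icc (-(lam/2)) (lam/2)))
    (hGanti : AntitoneOn G (Icc (-(lam/2)) (lam/2)))
    (hG01 : ∀ t ∈ Icc (-(lam/2)) (lam/2), G t ∈ Icc (0:ℝ) 1)
    {z h : ℝ} (hz : |z| < lam/2) (hh0 : 0 < h) (hzh : z + h < lam/2)
    (hhb : h ≤ z + lam/2) {α β : ℝ} (h0α : 0 ≤ α) (hαβ : α ≤ β) (hβb : β ≤ z + lam/2) :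
    (∫ s in α..β, (G (s - (z+h)) - G (s - z))) ≤ h := by
  obtain ⟨hz1, hz2⟩ := abs_lt.mp hz
  have hb0 : 0 < z + lam/2 := by linarith
  set b := z + lam/2 with hbdef
  have hmem1 : ∀ s ∈ Icc (0:ℝ) b, s - (z+h) ∈ Icc (-(lam/2)) (lam/2) := by
    intro s hs; exact ⟨by simp only [hbdef] at hs; linarith [hs.1], by simp only [hbdef] at hs; linarith [hs.2]⟩
  have hmem2 : ∀ s ∈ Icc (0:ℝ) b, s - z ∈ Icc (-(lam/2)) (lam/2) := by
    intro s hs; exact ⟨by simp only [hbdef] at hs; linarith [hs.1], by simp only [hbdef] at hs; linarith [hs.2]⟩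
  have hc1 : ContinuousOn (fun s => G (s - (z+h))) (Icc (0:ℝ) b) :=
    hGc.comp (by fun_prop) hmem1
  have hc2 : ContinuousOn (fun s => G (s - z)) (Icc (0:ℝ) b) :=
    hGc.comp (by fun_prop) hmem2
  have hcΔ : ContinuousOn (fun s => G (s - (z+h)) - G (s - z)) (Icc (0:ℝ) b) := hc1.sub hc2
  have hΔnn : ∀ s ∈ Icc (0:ℝ) b, 0 ≤ G (s - (z+h)) - G (s - z) := by
    intro s hs
    have := hGanti (hmem1 s hs) (hmem2 s hs) (by linarith)
    linarith
  have hiΔ : ∀ x y : ℝ, 0 ≤ x → x ≤ y → y ≤ b →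
      IntervalIntegrable (fun s => G (s - (z+h)) - G (s - z)) volume x y := by
    intro x y hx hxy hyb
    apply (hcΔ.mono _).intervalIntegrable
    rw [uIcc_of_le hxy]
    exact Icc_subset_Icc hx hyb
  -- ∫_α^β ≤ ∫_0^b
  have hsplit1 : (∫ s in (0:ℝ)..α, (G (s - (z+h)) - G (s - z)))
      + (∫ s in α..β, (G (s - (z+h)) - G (s - z))) = ∫ s in (0:ℝ)..β, (G (s - (z+h)) - G (s - z)) :=
    integral_add_adjacent_intervals (hiΔ 0 α le_rfl h0α (by linarith)) (hiΔ α β h0α hαβ hβb)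
  have hsplit2 : (∫ s in (0:ℝ)..β, (G (s - (z+h)) - G (s - z)))
      + (∫ s in β..b, (G (s - (z+h)) - G (s - z))) = ∫ s in (0:ℝ)..b, (G (s - (z+h)) - G (s - z)) :=
    integral_add_adjacent_intervals (hiΔ 0 β le_rfl (by linarith) hβb) (hiΔ β b (by linarith) hβb le_rfl)
  have hnn1 : 0 ≤ ∫ s in (0:ℝ)..α, (G (s - (z+h)) - G (s - z)) :=
    intervalIntegral.integral_nonneg h0α (fun s hs => hΔnn s ⟨hs.1, by linarith [hs.2]⟩)
  have hnn2 : 0 ≤ ∫ s in β..b, (G (s - (z+h)) - G (s - z)) :=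
    intervalIntegral.integral_nonneg hβb (fun s hs => hΔnn s ⟨by linarith [hs.1], hs.2⟩)
  have hle0b : (∫ s in α..β, (G (s - (z+h)) - G (s - z)))
      ≤ ∫ s in (0:ℝ)..b, (G (s - (z+h)) - G (s - z)) := by linarith
  -- compute ∫_0^b
  have hi1 : IntervalIntegrable (fun s => G (s - (z+h))) volume 0 b := by
    apply (hc1.mono _).intervalIntegrable
    rw [uIcc_of_le hb0.le]
  have hi2 : IntervalIntegrable (fun s => G (s - z)) volume 0 b := by
    apply (hc2.mono _).intervalIntegrable
    rw [uIcc_of_le hb0.le]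
  have hGi : ∀ x y : ℝ, -(lam/2) ≤ x → x ≤ y → y ≤ lam/2 → IntervalIntegrable G volume x y := by
    intro x y hx hxy hyb
    apply (hGc.mono _).intervalIntegrable
    rw [uIcc_of_le hxy]
    exact Icc_subset_Icc hx hyb
  have he1 : (∫ s in (0:ℝ)..b, G (s - (z+h))) = ∫ u in (-z-h)..(lam/2 - h), G u := by
    rw [intervalIntegral.integral_comp_sub_right G (z+h)]
    congr 1 <;> ring
  have he2 : (∫ s in (0:ℝ)..b, G (s - z)) = ∫ u in (-z)..(lam/2), G u := by
    rw [intervalIntegral.integral_comp_sub_right G z]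
    congr 1 <;> ring
  have hsub : (∫ s in (0:ℝ)..b, (G (s - (z+h)) - G (s - z)))
      = (∫ u in (-z-h)..(lam/2 - h), G u) - ∫ u in (-z)..(lam/2), G u := by
    rw [intervalIntegral.integral_sub hi1 hi2, he1, he2]
  have ha1 : (∫ u in (-z-h)..(-z), G u) + (∫ u in (-z)..(lam/2 - h), G u)
      = ∫ u in (-z-h)..(lam/2 - h), G u :=
    integral_add_adjacent_intervals (hGi _ _ (by linarith) (by linarith) (by linarith))
      (hGi _ _ (by linarith) (by simp only [hbdef] at hhb; linarith) (by linarith))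
  have ha2 : (∫ u in (-z)..(lam/2 - h), G u) + (∫ u in (lam/2 - h)..(lam/2), G u)
      = ∫ u in (-z)..(lam/2), G u :=
    integral_add_adjacent_intervals (hGi _ _ (by linarith) (by simp only [hbdef] at hhb; linarith) (by linarith))
      (hGi _ _ (by linarith) (by linarith) le_rfl)
  have hb1 : (∫ u in (-z-h)..(-z), G u) ≤ h := by
    have : (∫ u in (-z-h)..(-z), G u) ≤ ∫ _u in (-z-h)..(-z), (1:ℝ) := by
      apply integral_mono_on (by linarith) (hGi _ _ (by linarith) (by linarith) (by linarith))
        intervalIntegrable_const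
      intro x hx
      exact (hG01 x ⟨by linarith [hx.1], by linarith [hx.2]⟩).2
    rw [intervalIntegral.integral_const, smul_eq_mul] at this
    linarith
  have hb2 : 0 ≤ ∫ u in (lam/2 - h)..(lam/2), G u := by
    apply intervalIntegral.integral_nonneg (by linarith)
    intro x hx
    have hx' : x ∈ Icc (-(lam/2)) (lam/2) := ⟨by simp only [hbdef] at hhb; linarith [hx.1], hx.2⟩
    exact (hG01 x hx').1
  calc (∫ s in α..β, (G (s - (z+h)) - G (s - z)))
      ≤ ∫ s in (0:ℝ)..b, (G (s - (z+h)) - G (s - z)) := hle0b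
    _ = (∫ u in (-z-h)..(lam/2 - h), G u) - ∫ u in (-z)..(lam/2), G u := hsub
    _ = (∫ u in (-z-h)..(-z), G u) - ∫ u in (lam/2 - h)..(lam/2), G u := by
        rw [← ha1, ← ha2]; ring
    _ ≤ h := by linarith

set_option maxHeartbeats 8000000 in
lemma key_step {q lam a r : ℝ} (hq0 : 0 < q) (hq1 : q < 1) (hlam : 0 < lam)
    (hr0 : 0 < r) (hr1 : r ≤ 1) (hrlam : r ≤ lam/4) (hrq : r ^ q ≤ 1/32)
    (ha : 2*(9*q + q * r^(q-1) * (lam/2)^(1-q)) + 1 ≤ a)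
    {G : ℝ → ℝ}
    (hG : ContDiffOn ℝ 1 G (Icc (-(lam/2)) (lam/2)))
    (hGanti : AntitoneOn G (Icc (-(lam/2)) (lam/2)))
    (hG01 : ∀ t ∈ Icc (-(lam/2)) (lam/2), G t ∈ Icc (0:ℝ) 1)
    (hG' : ∀ x : ℝ, |x| < lam/2 → -(deriv G x) ≤ a * (lam/2 - |x|) ^ (q-1))
    {z h : ℝ} (hz : |z| < lam/2) (hh0 : 0 < h)
    (hh1 : 8*h ≤ lam/2 - |z|) (hh2 : 4*h ≤ r) :
    0 ≤ (∫ s in (0:ℝ)..(z + h + lam/2), q * (max s 0) ^ (q-1) * G (s - (z+h)))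
        - (∫ s in (0:ℝ)..(z + lam/2), q * (max s 0) ^ (q-1) * G (s - z))
    ∧ (∫ s in (0:ℝ)..(z + h + lam/2), q * (max s 0) ^ (q-1) * G (s - (z+h)))
        - (∫ s in (0:ℝ)..(z + lam/2), q * (max s 0) ^ (q-1) * G (s - z))
      ≤ a * (lam/2 - |z|) ^ (q-1) * h := by
  have hGc : ContinuousOn G (Icc (-(lam/2)) (lam/2)) := hG.continuousOn
  obtain ⟨hz1, hz2⟩ := abs_lt.mp hz
  have hzabs : z ≤ |z| := le_abs_self z
  have hzabs' : -|z| ≤ z := neg_abs_le z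
  have habs0 : 0 ≤ |z| := abs_nonneg z
  obtain ⟨g, hgdef⟩ : ∃ g' : ℝ, g' = (lam/2 - |z|) ^ (q-1) := ⟨_, rfl⟩
  have hgz0 : 0 < lam/2 - |z| := by linarith
  have hgpos : 0 < g := by rw [hgdef]; exact Real.rpow_pos_of_pos hgz0 _
  obtain ⟨b, hbdef⟩ : ∃ b' : ℝ, b' = z + lam/2 := ⟨_, rfl⟩
  rw [show z + h + lam/2 = b + h by rw [hbdef]; ring, ← hbdef, ← hgdef]
  have hb0 : 0 < b := by rw [hbdef]; linarith
  have hgb : lam/2 - |z| ≤ b := by rw [hbdef]; linarith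
  have hbq : b ^ (q-1) ≤ g := by
    rw [hgdef]; exact Real.rpow_le_rpow_of_nonpos hgz0 hgb (by linarith)
  have hApos : (0:ℝ) ≤ q * r^(q-1) * (lam/2)^(1-q) := by positivity
  have ha0 : 0 < a := by linarith
  have h8 : 8 * h ≤ b := le_trans hh1 hgb
  have hzh : z + h < lam/2 := by nlinarith
  have hq1' : q - 1 ≤ 0 := by linarith
  have hqne : q - 1 ≠ 0 := by intro hc; linarith [hc]
  -- memberships
  have hmemA : ∀ s ∈ Icc (0:ℝ) (b+h), s - (z+h) ∈ Icc (-(lam/2)) (lam/2) := by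
    intro s hs
    simp only [hbdef] at hs
    exact ⟨by linarith [hs.1], by linarith [hs.2]⟩
  have hmemB : ∀ s ∈ Icc (0:ℝ) b, s - z ∈ Icc (-(lam/2)) (lam/2) := by
    intro s hs
    simp only [hbdef] at hs
    exact ⟨by linarith [hs.1], by linarith [hs.2]⟩
  -- Δ facts
  have hΔnn : ∀ s ∈ Icc (0:ℝ) b, 0 ≤ G (s - (z+h)) - G (s - z) := by
    intro s hs
    have h1 := hmemA s ⟨hs.1, by linarith [hs.2]⟩
    have h2 := hmemB s hs
    have := hGanti h1 h2 (by linarith)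
    linarith
  have hΔle1 : ∀ s ∈ Icc (0:ℝ) b, G (s - (z+h)) - G (s - z) ≤ 1 := by
    intro s hs
    have h1 := hG01 _ (hmemA s ⟨hs.1, by linarith [hs.2]⟩)
    have h2 := hG01 _ (hmemB s hs)
    simp only [mem_Icc] at h1 h2
    linarith [h1.2, h2.1]
  -- integrability of k·Δ on subintervals of [0,b]
  have hikΔ : ∀ α β : ℝ, 0 ≤ α → α ≤ β → β ≤ b →
      IntervalIntegrable (fun s => q * (max s 0) ^ (q-1) * (G (s - (z+h)) - G (s - z)))
        volume α β := by
    intro α β hα hαβ hβb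
    apply integ_master hq0 hq1 _ hα hαβ
    · have hA := phi_aesm (y := z + h) hGc hαβ (fun s hs =>
        hmemA s ⟨by linarith [hs.1], by linarith [hs.2]⟩)
      have hB := phi_aesm (y := z) hGc hαβ (fun s hs =>
        hmemB s ⟨by linarith [hs.1], by linarith [hs.2]⟩)
      exact hA.sub hB
    · intro s hs
      rw [uIoc_of_le hαβ] at hs
      have hs' : s ∈ Icc (0:ℝ) b := ⟨by linarith [hs.1], by linarith [hs.2]⟩
      rw [abs_le]
      exact ⟨by linarith [hΔnn s hs'], hΔle1 s hs'⟩
  -- integrability of the pieces of f_h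
  have hifh : ∀ α β : ℝ, 0 ≤ α → α ≤ β → β ≤ b + h →
      IntervalIntegrable (fun s => q * (max s 0) ^ (q-1) * G (s - (z+h))) volume α β := by
    intro α β hα hαβ hβb
    apply integ_master hq0 hq1 _ hα hαβ
    · exact phi_aesm (y := z + h) hGc hαβ (fun s hs =>
        hmemA s ⟨by linarith [hs.1], by linarith [hs.2]⟩)
    · intro s hs
      rw [uIoc_of_le hαβ] at hs
      have := hG01 _ (hmemA s ⟨by linarith [hs.1], by linarith [hs.2]⟩)
      simp only [mem_Icc] at this
      rw [abs_le]
      exact ⟨by linarith [this.1], this.2⟩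
  have hifz : ∀ α β : ℝ, 0 ≤ α → α ≤ β → β ≤ b →
      IntervalIntegrable (fun s => q * (max s 0) ^ (q-1) * G (s - z)) volume α β := by
    intro α β hα hαβ hβb
    apply integ_master hq0 hq1 _ hα hαβ
    · exact phi_aesm (y := z) hGc hαβ (fun s hs =>
        hmemB s ⟨by linarith [hs.1], by linarith [hs.2]⟩)
    · intro s hs
      rw [uIoc_of_le hαβ] at hs
      have := hG01 _ (hmemB s ⟨by linarith [hs.1], by linarith [hs.2]⟩)
      simp only [mem_Icc] at this
      rw [abs_le]
      exact ⟨by linarith [this.1], this.2⟩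
  -- main decomposition  A - B = T1 + ∫_0^b kΔ
  have hsplitA : (∫ s in (0:ℝ)..b, q * (max s 0) ^ (q-1) * G (s - (z+h)))
      + (∫ s in b..(b+h), q * (max s 0) ^ (q-1) * G (s - (z+h)))
      = ∫ s in (0:ℝ)..(b+h), q * (max s 0) ^ (q-1) * G (s - (z+h)) :=
    integral_add_adjacent_intervals (hifh 0 b le_rfl hb0.le (by linarith))
      (hifh b (b+h) hb0.le (by linarith) le_rfl)
  have hdiff0b : (∫ s in (0:ℝ)..b, q * (max s 0) ^ (q-1) * G (s - (z+h)))
      - (∫ s in (0:ℝ)..b, q * (max s 0) ^ (q-1) * G (s - z))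
      = ∫ s in (0:ℝ)..b, q * (max s 0) ^ (q-1) * (G (s - (z+h)) - G (s - z)) := by
    rw [← intervalIntegral.integral_sub (hifh 0 b le_rfl hb0.le (by linarith))
      (hifz 0 b le_rfl hb0.le le_rfl)]
    congr 1
    funext s
    ring
    -- T1 bound
  have hT1nn : 0 ≤ ∫ s in b..(b+h), q * (max s 0) ^ (q-1) * G (s - (z+h)) := by
    apply intervalIntegral.integral_nonneg (by linarith)
    intro s hs
    have hg0 := (hG01 _ (hmemA s ⟨by linarith [hs.1], by linarith [hs.2]⟩)).1
    have : (0:ℝ) ≤ (max s 0) ^ (q-1) := Real.rpow_nonneg (le_max_right _ _) _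
    positivity
  have hT1 : (∫ s in b..(b+h), q * (max s 0) ^ (q-1) * G (s - (z+h))) ≤ q * g * h := by
    have hmono : (∫ s in b..(b+h), q * (max s 0) ^ (q-1) * G (s - (z+h)))
        ≤ ∫ _s in b..(b+h), q * b ^ (q-1) := by
      apply integral_mono_on (by linarith) (hifh b (b+h) hb0.le (by linarith) le_rfl)
        intervalIntegrable_const
      intro x hx
      have hx0 : 0 < x := lt_of_lt_of_le hb0 hx.1
      rw [max_eq_left hx0.le]
      have h1 : x ^ (q-1) ≤ b ^ (q-1) := Real.rpow_le_rpow_of_nonpos hb0 hx.1 hq1'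
      have h2 := hG01 _ (hmemA x ⟨hx0.le, by linarith [hx.2]⟩)
      simp only [mem_Icc] at h2
      have h3 : (0:ℝ) ≤ x ^ (q-1) := Real.rpow_nonneg hx0.le _
      calc q * x ^ (q-1) * G (x - (z+h)) ≤ q * x ^ (q-1) * 1 :=
            mul_le_mul_of_nonneg_left h2.2 (by positivity)
        _ = q * x ^ (q-1) := mul_one _
        _ ≤ q * b ^ (q-1) := mul_le_mul_of_nonneg_left h1 hq0.le
    rw [intervalIntegral.integral_const, smul_eq_mul] at hmono
    have hb1 : q * b ^ (q-1) ≤ q * g := mul_le_mul_of_nonneg_left hbq hq0.le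
    have : b + h - b = h := by ring
    rw [this] at hmono
    nlinarith
  -- Δ nonneg integrals
  have hkΔnn : ∀ α β : ℝ, 0 ≤ α → α ≤ β → β ≤ b →
      0 ≤ ∫ s in α..β, q * (max s 0) ^ (q-1) * (G (s - (z+h)) - G (s - z)) := by
    intro α β hα hαβ hβb
    apply intervalIntegral.integral_nonneg hαβ
    intro s hs
    have h1 := hΔnn s ⟨by linarith [hs.1], by linarith [hs.2]⟩
    have h2 : (0:ℝ) ≤ (max s 0) ^ (q-1) := Real.rpow_nonneg (le_max_right _ _) _
    positivity
  -- R1 bound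
  have hR1 : (∫ s in (b - 4*h)..b, q * (max s 0) ^ (q-1) * (G (s - (z+h)) - G (s - z)))
      ≤ 8 * q * g * h := by
    have hmono : (∫ s in (b - 4*h)..b, q * (max s 0) ^ (q-1) * (G (s - (z+h)) - G (s - z)))
        ≤ ∫ _s in (b - 4*h)..b, 2 * q * g := by
      apply integral_mono_on (by linarith) (hikΔ (b - 4*h) b (by linarith) (by linarith) le_rfl)
        intervalIntegrable_const
      intro x hx
      have hx0 : 0 < x := by linarith [hx.1]
      rw [max_eq_left hx0.le]
      have h1 : x ^ (q-1) ≤ (b - 4*h) ^ (q-1) :=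
        Real.rpow_le_rpow_of_nonpos (by linarith) hx.1 hq1'
      have h1b : (b - 4*h) ^ (q-1) ≤ ((1/2) * b) ^ (q-1) :=
        Real.rpow_le_rpow_of_nonpos (by linarith) (by linarith) hq1'
      have h1c : ((1/2) * b) ^ (q-1) ≤ 2 * b ^ (q-1) :=
        scale_rpow hq0 hq1 (by norm_num) (by norm_num) hb0.le
      have h2 : G (x - (z+h)) - G (x - z) ≤ 1 := hΔle1 x ⟨hx0.le, hx.2⟩
      have h2' : 0 ≤ G (x - (z+h)) - G (x - z) := hΔnn x ⟨hx0.le, hx.2⟩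
      have h3 : (0:ℝ) ≤ x ^ (q-1) := Real.rpow_nonneg hx0.le _
      calc q * x ^ (q-1) * (G (x - (z+h)) - G (x - z)) ≤ q * x ^ (q-1) * 1 :=
            mul_le_mul_of_nonneg_left h2 (by positivity)
        _ = q * x ^ (q-1) := mul_one _
        _ ≤ q * (2 * b ^ (q-1)) := mul_le_mul_of_nonneg_left (by linarith) hq0.le
        _ ≤ q * (2 * g) := mul_le_mul_of_nonneg_left (by linarith) hq0.le
        _ = 2 * q * g := by ring
    rw [intervalIntegral.integral_const, smul_eq_mul] at hmono
    have : b - (b - 4*h) = 4 * h := by ring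
    rw [this] at hmono
    nlinarith
  -- pointwise Δ bound
  have hdelta : ∀ s : ℝ, 0 ≤ s → s ≤ b - 4*h →
      G (s - (z+h)) - G (s - z) ≤ 2 * a * h * (lam/2 - |s - z|) ^ (q-1) := by
    intro s hs0 hsb
    have hmlb : min (lam/2 - |z|) (b - s) ≤ lam/2 - |s - z| := by
      rcases le_total s z with hsz | hsz
      · have : |s - z| = z - s := by rw [abs_of_nonpos (by linarith)]; ring
        rw [this]
        have hz0 : 0 ≤ z := le_trans hs0 hsz
        have : z - s ≤ |z| := by rw [abs_of_nonneg hz0]; linarith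
        exact le_trans (min_le_left _ _) (by linarith)
      · have : |s - z| = s - z := abs_of_nonneg (by linarith)
        rw [this]
        exact le_trans (min_le_right _ _) (by rw [hbdef]; linarith)
    have hm4h : 4 * h ≤ lam/2 - |s - z| := by
      refine le_trans ?_ hmlb
      apply le_min (by linarith) (by linarith)
    have hGd := G_diff_bound hq1 hlam ha0.le hG hG' hh0.le
      (u := s - (z+h)) (M := |s - z| + h) ?_ ?_
    · have heq : s - (z+h) + h = s - z := by ring
      rw [heq] at hGd
      have hsc : (lam/2 - (|s - z| + h)) ^ (q-1) ≤ 2 * (lam/2 - |s - z|) ^ (q-1) := by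
        have e1 : (3/4) * (lam/2 - |s - z|) ≤ lam/2 - (|s - z| + h) := by linarith
        have e2 : (lam/2 - (|s - z| + h)) ^ (q-1) ≤ ((3/4) * (lam/2 - |s - z|)) ^ (q-1) :=
          Real.rpow_le_rpow_of_nonpos (by linarith) e1 hq1'
        have e3 : ((3/4) * (lam/2 - |s - z|)) ^ (q-1) ≤ 2 * (lam/2 - |s - z|) ^ (q-1) :=
          scale_rpow hq0 hq1 (by norm_num) (by norm_num) (by linarith)
        linarith
      calc G (s - (z+h)) - G (s - z) ≤ a * h * (lam/2 - (|s - z| + h)) ^ (q-1) := hGd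
        _ ≤ a * h * (2 * (lam/2 - |s - z|) ^ (q-1)) :=
            mul_le_mul_of_nonneg_left hsc (by positivity)
        _ = 2 * a * h * (lam/2 - |s - z|) ^ (q-1) := by ring
    · intro x hx
      simp only [mem_Icc] at hx
      have hx2 : x ≤ s - z := by linarith [hx.2]
      rw [abs_le]
      constructor
      · have := le_abs_self (s - z)
        have := neg_abs_le (s - z)
        linarith [hx.1]
      · linarith [le_abs_self (s - z)]
    · linarith
    -- continuity of Δ and integrability
  have hc1 : ContinuousOn (fun s => G (s - (z+h))) (Icc (0:ℝ) b) :=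
    hGc.comp (by fun_prop) (fun s hs => hmemA s ⟨hs.1, by linarith [hs.2]⟩)
  have hc2 : ContinuousOn (fun s => G (s - z)) (Icc (0:ℝ) b) :=
    hGc.comp (by fun_prop) (fun s hs => hmemB s hs)
  have hiΔ : ∀ α β : ℝ, 0 ≤ α → α ≤ β → β ≤ b →
      IntervalIntegrable (fun s => G (s - (z+h)) - G (s - z)) volume α β := by
    intro α β hα hαβ hβb
    apply ((hc1.sub hc2).mono _).intervalIntegrable
    rw [uIcc_of_le hαβ]
    exact Icc_subset_Icc hα hβb
  -- body bound on [0, b-4h]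
  have hLg : 1 ≤ (lam/2)^(1-q) * g := by
    have h1 : (lam/2) ^ (q-1) ≤ g := by
      rw [hgdef]; exact Real.rpow_le_rpow_of_nonpos hgz0 (by linarith) hq1'
    have h2 : (lam/2)^(1-q) * (lam/2)^(q-1) = 1 := by
      rw [← Real.rpow_add (by linarith : (0:ℝ) < lam/2)]
      norm_num
    have h3 : (0:ℝ) < (lam/2)^(1-q) := Real.rpow_pos_of_pos (by linarith) _
    nlinarith
  have hbody : (∫ s in (0:ℝ)..(b - 4*h), q * (max s 0) ^ (q-1) * (G (s - (z+h)) - G (s - z)))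
      ≤ (12 * a * r^q + q * r^(q-1) * (lam/2)^(1-q)) * (g * h) := by
    have hrq0 : (0:ℝ) < r ^ q := Real.rpow_pos_of_pos hr0 _
    have hrq10 : (0:ℝ) < r ^ (q-1) := Real.rpow_pos_of_pos hr0 _
    have hL1q : (0:ℝ) < (lam/2)^(1-q) := Real.rpow_pos_of_pos (by linarith) _
    by_cases hcase : b ≤ 2*r
    · -- Case A : z ≤ 0, m(s) = b - s, g = b^(q-1)
      have hz0 : z ≤ 0 := by
        have : b ≤ lam/2 := by linarith
        rw [hbdef] at this; linarith
      have habsz : |z| = -z := abs_of_nonpos hz0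
      have hgbA : lam/2 - |z| = b := by rw [habsz, hbdef]; ring
      have hgA : g = b ^ (q-1) := by rw [hgdef, hgbA]
      have hdeltaA : ∀ x : ℝ, 0 ≤ x → x ≤ b - 4*h →
          G (x - (z+h)) - G (x - z) ≤ 2*a*h * (b - x) ^ (q-1) := by
        intro x hx0 hxb
        have h1 := hdelta x hx0 hxb
        have h2 : |x - z| = x - z := abs_of_nonneg (by linarith)
        have h3 : lam/2 - |x - z| = b - x := by rw [h2, hbdef]; ring
        rwa [h3] at h1
      have hhalf : ∀ x : ℝ, x ≤ b/2 → ((1/2)*b) ^ (q-1) ≤ (b - x) ^ (q-1) →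
          True := fun _ _ _ => trivial
      -- DA1 : [0, b/2]
      have hDA1 : (∫ s in (0:ℝ)..(b/2), q * (max s 0) ^ (q-1) * (G (s - (z+h)) - G (s - z)))
          ≤ ∫ s in (0:ℝ)..(b/2), q * s ^ (q-1) * (4*a*h*g) := by
        apply integral_mono_on (by linarith) (hikΔ 0 (b/2) le_rfl (by linarith) (by linarith))
          (((intervalIntegrable_rpow' (by linarith)).const_mul q).mul_const _)
        intro x hx
        rw [max_eq_left hx.1]
        have hΔb : G (x - (z+h)) - G (x - z) ≤ 4*a*h*g := by
          have h1 := hdeltaA x hx.1 (by linarith [hx.2])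
          have h2 : (b - x) ^ (q-1) ≤ ((1/2)*b) ^ (q-1) :=
            Real.rpow_le_rpow_of_nonpos (by linarith) (by linarith [hx.2]) hq1'
          have h3 : ((1/2)*b) ^ (q-1) ≤ 2 * b ^ (q-1) :=
            scale_rpow hq0 hq1 (by norm_num) (by norm_num) hb0.le
          rw [hgA]
          have h5 : 2*a*h*((b - x) ^ (q-1)) ≤ 2*a*h*(2 * b ^ (q-1)) :=
            mul_le_mul_of_nonneg_left (le_trans h2 h3) (by positivity)
          linarith
        exact mul_le_mul_of_nonneg_left hΔb
          (mul_nonneg hq0.le (Real.rpow_nonneg hx.1 _))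
      have hDA1v : (∫ s in (0:ℝ)..(b/2), q * s ^ (q-1) * (4*a*h*g)) ≤ r^q * (4*a*h*g) := by
        rw [intervalIntegral.integral_mul_const, int_qs hq0 hq1 le_rfl (by linarith)]
        have h0q : (0:ℝ) ^ q = 0 := Real.zero_rpow hq0.ne'
        have hbr : (b/2) ^ q ≤ r ^ q := Real.rpow_le_rpow (by linarith) (by linarith) hq0.le
        rw [h0q]
        have : (0:ℝ) ≤ 4*a*h*g := by positivity
        nlinarith
      -- DA2 : [b/2, b - 4h]
      have hDA2 : (∫ s in (b/2)..(b - 4*h), q * (max s 0) ^ (q-1) * (G (s - (z+h)) - G (s - z)))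
          ≤ ∫ s in (b/2)..(b - 4*h), q * (b - s) ^ (q-1) * (4*a*h*g) := by
        apply integral_mono_on (by linarith) (hikΔ (b/2) (b - 4*h) (by linarith) (by linarith) (by linarith))
          ((int_qbs_integrable hq1 hq0 b _ _).mul_const _)
        intro x hx
        have hx0 : 0 < x := by linarith [hx.1]
        rw [max_eq_left hx0.le]
        have h1 := hdeltaA x hx0.le hx.2
        have h2 : x ^ (q-1) ≤ ((1/2)*b) ^ (q-1) :=
          Real.rpow_le_rpow_of_nonpos (by linarith) (by linarith [hx.1]) hq1'
        have h3 : ((1/2)*b) ^ (q-1) ≤ 2 * b ^ (q-1) :=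
          scale_rpow hq0 hq1 (by norm_num) (by norm_num) hb0.le
        have h4 : (0:ℝ) ≤ (b - x) ^ (q-1) := Real.rpow_nonneg (by linarith [hx.2]) _
        have h5 : (0:ℝ) ≤ x ^ (q-1) := Real.rpow_nonneg hx0.le _
        have h6 : x ^ (q-1) ≤ 2 * g := by rw [hgA]; linarith
        calc q * x ^ (q-1) * (G (x - (z+h)) - G (x - z))
            ≤ q * x ^ (q-1) * (2*a*h * (b - x) ^ (q-1)) :=
              mul_le_mul_of_nonneg_left h1 (by positivity)
          _ ≤ q * (2*g) * (2*a*h * (b - x) ^ (q-1)) := by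
              apply mul_le_mul_of_nonneg_right _ (by positivity)
              exact mul_le_mul_of_nonneg_left h6 hq0.le
          _ = q * (b - x) ^ (q-1) * (4*a*h*g) := by ring
      have hDA2v : (∫ s in (b/2)..(b - 4*h), q * (b - s) ^ (q-1) * (4*a*h*g))
          ≤ r^q * (4*a*h*g) := by
        rw [intervalIntegral.integral_mul_const,
          int_qbs hq0 hq1 (by linarith) (by linarith) (by linarith)]
        have e1 : b - b/2 = b/2 := by ring
        rw [e1]
        have hbr : (b/2) ^ q ≤ r ^ q := Real.rpow_le_rpow (by linarith) (by linarith) hq0.le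
        have h4 : (0:ℝ) ≤ (b - (b - 4*h)) ^ q := Real.rpow_nonneg (by linarith) _
        have : (0:ℝ) ≤ 4*a*h*g := by positivity
        nlinarith
      have hsplitD : (∫ s in (0:ℝ)..(b/2), q * (max s 0) ^ (q-1) * (G (s - (z+h)) - G (s - z)))
          + (∫ s in (b/2)..(b - 4*h), q * (max s 0) ^ (q-1) * (G (s - (z+h)) - G (s - z)))
          = ∫ s in (0:ℝ)..(b - 4*h), q * (max s 0) ^ (q-1) * (G (s - (z+h)) - G (s - z)) :=
        integral_add_adjacent_intervals (hikΔ 0 (b/2) le_rfl (by linarith) (by linarith))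
          (hikΔ (b/2) (b - 4*h) (by linarith) (by linarith) (by linarith))
      have hnn : (0:ℝ) ≤ q * r^(q-1) * (lam/2)^(1-q) * (g * h) := by positivity
      have hfin : r^q * (4*a*h*g) + r^q * (4*a*h*g) ≤ 12 * a * r^q * (g*h) := by
        have hp : (0:ℝ) ≤ a * r^q * (g * h) := by positivity
        nlinarith [hp]
      linarith
    · -- Case B : 2r < b
      push_neg at hcase
      have hrb2 : r < b/2 := by linarith
      -- P1 : [0, r]
      have hP1 : (∫ s in (0:ℝ)..r, q * (max s 0) ^ (q-1) * (G (s - (z+h)) - G (s - z)))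
          ≤ ∫ s in (0:ℝ)..r, q * s ^ (q-1) * (6*a*h*g) := by
        apply integral_mono_on hr0.le (hikΔ 0 r le_rfl hr0.le (by linarith))
          (((intervalIntegrable_rpow' (by linarith)).const_mul q).mul_const _)
        intro x hx
        rw [max_eq_left hx.1]
        have hΔb : G (x - (z+h)) - G (x - z) ≤ 6*a*h*g := by
          have h1 := hdelta x hx.1 (by linarith [hx.2])
          have hmlb : min (lam/2 - |z|) (b - x) ≤ lam/2 - |x - z| := by
            rcases le_total x z with hsz | hsz
            · have he : |x - z| = z - x := by rw [abs_of_nonpos (by linarith)]; ring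
              rw [he]
              have hz0 : 0 ≤ z := le_trans hx.1 hsz
              have : z - x ≤ |z| := by rw [abs_of_nonneg hz0]; linarith [hx.1]
              exact le_trans (min_le_left _ _) (by linarith)
            · have he : |x - z| = x - z := abs_of_nonneg (by linarith)
              rw [he]
              exact le_trans (min_le_right _ _) (by rw [hbdef]; linarith)
          have hmm : (lam/2 - |x - z|) ^ (q-1) ≤ 3 * g := by
            rcases le_total (lam/2 - |z|) (b - x) with hmin | hmin
            · have : lam/2 - |z| ≤ lam/2 - |x - z| := by
                calc lam/2 - |z| = min (lam/2 - |z|) (b - x) := (min_eq_left hmin).symm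
                  _ ≤ _ := hmlb
              have := Real.rpow_le_rpow_of_nonpos hgz0 this hq1'
              rw [← hgdef] at this
              linarith
            · have hb2x : b/2 ≤ b - x := by linarith [hx.2]
              have h5 : (1/2)*b ≤ lam/2 - |x - z| := by
                calc (1/2)*b ≤ b - x := by linarith
                  _ = min (lam/2 - |z|) (b - x) := (min_eq_right hmin).symm
                  _ ≤ _ := hmlb
              have h6 := Real.rpow_le_rpow_of_nonpos (by linarith) h5 hq1'
              have h7 : ((1/2)*b) ^ (q-1) ≤ 2 * b ^ (q-1) :=
                scale_rpow hq0 hq1 (by norm_num) (by norm_num) hb0.le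
              linarith
          have h5 : 2*a*h*((lam/2 - |x - z|) ^ (q-1)) ≤ 2*a*h*(3*g) :=
            mul_le_mul_of_nonneg_left hmm (by positivity)
          linarith
        exact mul_le_mul_of_nonneg_left hΔb
          (mul_nonneg hq0.le (Real.rpow_nonneg hx.1 _))
      have hP1v : (∫ s in (0:ℝ)..r, q * s ^ (q-1) * (6*a*h*g)) ≤ r^q * (6*a*h*g) := by
        rw [intervalIntegral.integral_mul_const, int_qs hq0 hq1 le_rfl hr0.le]
        rw [Real.zero_rpow hq0.ne']
        have : (0:ℝ) ≤ 6*a*h*g := by positivity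
        nlinarith
      -- P2 : [r, b - r]
      have hP2 : (∫ s in r..(b - r), q * (max s 0) ^ (q-1) * (G (s - (z+h)) - G (s - z)))
          ≤ ∫ s in r..(b - r), q * r ^ (q-1) * (G (s - (z+h)) - G (s - z)) := by
        apply integral_mono_on (by linarith) (hikΔ r (b - r) hr0.le (by linarith) (by linarith))
          ((hiΔ r (b - r) hr0.le (by linarith) (by linarith)).const_mul _)
        intro x hx
        rw [max_eq_left (by linarith [hx.1] : (0:ℝ) ≤ x)]
        have h1 : x ^ (q-1) ≤ r ^ (q-1) := Real.rpow_le_rpow_of_nonpos hr0 hx.1 hq1'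
        have h2 : 0 ≤ G (x - (z+h)) - G (x - z) :=
          hΔnn x ⟨by linarith [hx.1], by linarith [hx.2]⟩
        exact mul_le_mul_of_nonneg_right (mul_le_mul_of_nonneg_left h1 hq0.le) h2
      have hP2v : (∫ s in r..(b - r), q * r ^ (q-1) * (G (s - (z+h)) - G (s - z)))
          ≤ q * r^(q-1) * (lam/2)^(1-q) * (g * h) := by
        rw [intervalIntegral.integral_const_mul]
        have htv : (∫ s in r..(b - r), (G (s - (z+h)) - G (s - z))) ≤ h := by
          refine tv_bound hlam hGc hGanti hG01 hz hh0 hzh ?_ hr0.le ?_ ?_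
          · rw [hbdef] at h8; linarith
          · linarith
          · rw [hbdef] at hb0 h8 ⊢; linarith
        have hnntv : 0 ≤ ∫ s in r..(b - r), (G (s - (z+h)) - G (s - z)) := by
          apply intervalIntegral.integral_nonneg (by linarith)
          intro s hs
          exact hΔnn s ⟨by linarith [hs.1], by linarith [hs.2]⟩
        have h1 : q * r^(q-1) * (∫ s in r..(b-r), (G (s - (z+h)) - G (s - z)))
            ≤ q * r^(q-1) * h := mul_le_mul_of_nonneg_left htv (by positivity)
        have h2 : q * r^(q-1) * h ≤ q * r^(q-1) * (lam/2)^(1-q) * (g * h) := by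
          have hp : (0:ℝ) ≤ q * r^(q-1) * h :=
            mul_nonneg (mul_nonneg hq0.le hrq10.le) hh0.le
          have := mul_le_mul_of_nonneg_left hLg hp
          nlinarith [this]
        linarith
      -- P3 : [b - r, b - 4h]
      have hP3 : (∫ s in (b - r)..(b - 4*h), q * (max s 0) ^ (q-1) * (G (s - (z+h)) - G (s - z)))
          ≤ ∫ s in (b - r)..(b - 4*h), q * (b - s) ^ (q-1) * (4*a*h*g) := by
        apply integral_mono_on (by linarith)
          (hikΔ (b - r) (b - 4*h) (by linarith) (by linarith) (by linarith))
          ((int_qbs_integrable hq1 hq0 b _ _).mul_const _)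
        intro x hx
        have hx0 : 0 < x := by linarith [hx.1]
        rw [max_eq_left hx0.le]
        have hxz : z ≤ x := by
          have : b - r ≥ z := by rw [hbdef]; linarith
          linarith [hx.1]
        have h1 := hdelta x hx0.le hx.2
        have he : lam/2 - |x - z| = b - x := by
          rw [abs_of_nonneg (by linarith), hbdef]; ring
        rw [he] at h1
        have h2 : x ^ (q-1) ≤ ((1/2)*b) ^ (q-1) :=
          Real.rpow_le_rpow_of_nonpos (by linarith) (by linarith [hx.1]) hq1'
        have h3 : ((1/2)*b) ^ (q-1) ≤ 2 * b ^ (q-1) :=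
          scale_rpow hq0 hq1 (by norm_num) (by norm_num) hb0.le
        have h4 : (0:ℝ) ≤ (b - x) ^ (q-1) := Real.rpow_nonneg (by linarith [hx.2]) _
        have h6 : x ^ (q-1) ≤ 2 * g := by linarith
        calc q * x ^ (q-1) * (G (x - (z+h)) - G (x - z))
            ≤ q * x ^ (q-1) * (2*a*h * (b - x) ^ (q-1)) :=
              mul_le_mul_of_nonneg_left h1
                (mul_nonneg hq0.le (Real.rpow_nonneg hx0.le _))
          _ ≤ q * (2*g) * (2*a*h * (b - x) ^ (q-1)) := by
              apply mul_le_mul_of_nonneg_right _ (by positivity)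
              exact mul_le_mul_of_nonneg_left h6 hq0.le
          _ = q * (b - x) ^ (q-1) * (4*a*h*g) := by ring
      have hP3v : (∫ s in (b - r)..(b - 4*h), q * (b - s) ^ (q-1) * (4*a*h*g))
          ≤ r^q * (4*a*h*g) := by
        rw [intervalIntegral.integral_mul_const,
          int_qbs hq0 hq1 (by linarith) (by linarith) (by linarith)]
        have e1 : b - (b - r) = r := by ring
        have e2 : b - (b - 4*h) = 4*h := by ring
        rw [e1, e2]
        have h4 : (0:ℝ) ≤ (4*h) ^ q := Real.rpow_nonneg (by linarith) _
        have : (0:ℝ) ≤ 4*a*h*g := by positivity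
        nlinarith
      have hsplit1 : (∫ s in (0:ℝ)..r, q * (max s 0) ^ (q-1) * (G (s - (z+h)) - G (s - z)))
          + (∫ s in r..(b - r), q * (max s 0) ^ (q-1) * (G (s - (z+h)) - G (s - z)))
          = ∫ s in (0:ℝ)..(b - r), q * (max s 0) ^ (q-1) * (G (s - (z+h)) - G (s - z)) :=
        integral_add_adjacent_intervals (hikΔ 0 r le_rfl hr0.le (by linarith))
          (hikΔ r (b - r) hr0.le (by linarith) (by linarith))
      have hsplit2 : (∫ s in (0:ℝ)..(b - r), q * (max s 0) ^ (q-1) * (G (s - (z+h)) - G (s - z)))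
          + (∫ s in (b - r)..(b - 4*h), q * (max s 0) ^ (q-1) * (G (s - (z+h)) - G (s - z)))
          = ∫ s in (0:ℝ)..(b - 4*h), q * (max s 0) ^ (q-1) * (G (s - (z+h)) - G (s - z)) :=
        integral_add_adjacent_intervals (hikΔ 0 (b - r) le_rfl (by linarith) (by linarith))
          (hikΔ (b - r) (b - 4*h) (by linarith) (by linarith) (by linarith))
      have hfin : r^q * (6*a*h*g) + q * r^(q-1) * (lam/2)^(1-q) * (g*h) + r^q * (4*a*h*g)
          ≤ 12 * a * r^q * (g*h) + q * r^(q-1) * (lam/2)^(1-q) * (g*h) := by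
        have hp : (0:ℝ) ≤ a * r^q * (g*h) :=
          mul_nonneg (mul_nonneg ha0.le hrq0.le) (mul_nonneg hgpos.le hh0.le)
        nlinarith [hp]
      linarith
  -- final combination
  have hsplit0b : (∫ s in (0:ℝ)..(b - 4*h), q * (max s 0) ^ (q-1) * (G (s - (z+h)) - G (s - z)))
      + (∫ s in (b - 4*h)..b, q * (max s 0) ^ (q-1) * (G (s - (z+h)) - G (s - z)))
      = ∫ s in (0:ℝ)..b, q * (max s 0) ^ (q-1) * (G (s - (z+h)) - G (s - z)) :=
    integral_add_adjacent_intervals (hikΔ 0 (b - 4*h) le_rfl (by linarith) (by linarith))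
      (hikΔ (b - 4*h) b (by linarith) (by linarith) le_rfl)
  constructor
  · have := hkΔnn 0 b le_rfl hb0.le le_rfl
    linarith
  · have hcoef : 9*q + (12 * a * r^q + q * r^(q-1) * (lam/2)^(1-q)) ≤ a := by
      have hrq' : 12 * a * r^q ≤ (3/8) * a := by nlinarith [Real.rpow_pos_of_pos hr0 q]
      linarith
    have hgh : (0:ℝ) ≤ g * h := by positivity
    have := mul_le_mul_of_nonneg_right hcoef hgh
    nlinarith

open MeasureTheory Set Filter Topology in
set_option maxHeartbeats 1000000 in
theorem stmt_5 (q lam : ℝ) (hq0 : 0 < q) (hq1 : q < 1) (hlam : 0 < lam) :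
    ∃ a > (0:ℝ), ∀ G : ℝ → ℝ,
      ContDiffOn ℝ 1 G (Set.Icc (-lam/2) (lam/2)) →
      AntitoneOn G (Set.Icc (-lam/2) (lam/2)) →
      (∀ t ∈ Set.Icc (-lam/2) (lam/2), G t ∈ Set.Icc (0:ℝ) 1) →
      (∀ z : ℝ, |z| < lam/2 → -(deriv G z) ≤ a * (lam/2 - |z|) ^ (q-1)) →
      ∀ z : ℝ, |z| < lam/2 →
        -(deriv (fun y =>
            Real.exp (-(∫ t in (-lam/2)..(lam/2), q * (max (y + t) 0) ^ (q-1) * G t))) z)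
          ≤ a * (lam/2 - |z|) ^ (q-1) := by
  have hneg : -lam/2 = -(lam/2) := by ring
  -- the constant r
  set r : ℝ := min (lam/4) ((2:ℝ) ^ ((-5)/q)) with hrdef
  have hr0 : 0 < r := lt_min (by linarith) (Real.rpow_pos_of_pos two_pos _)
  have hr1 : r ≤ 1 := le_trans (min_le_right _ _)
    (Real.rpow_le_one_of_one_le_of_nonpos one_le_two
      (div_nonpos_of_nonpos_of_nonneg (by norm_num) hq0.le))
  have hrlam : r ≤ lam/4 := min_le_left _ _
  have hrq : r ^ q ≤ 1/32 := by
    have h1 : r ^ q ≤ ((2:ℝ) ^ ((-5)/q)) ^ q :=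
      Real.rpow_le_rpow hr0.le (min_le_right _ _) hq0.le
    have h2 : ((2:ℝ) ^ ((-5)/q)) ^ q = (2:ℝ) ^ (-5 : ℝ) := by
      rw [← Real.rpow_mul (by norm_num : (0:ℝ) ≤ 2)]
      congr 1
      field_simp
    have h3 : (2:ℝ) ^ (-5 : ℝ) = 1/32 := by
      have : ((-5 : ℤ) : ℝ) = (-5 : ℝ) := by push_cast; ring
      rw [← this, Real.rpow_intCast]
      norm_num
    rw [h2, h3] at h1
    exact h1
  have hApos : (0:ℝ) ≤ q * r^(q-1) * (lam/2)^(1-q) := by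
    have := Real.rpow_nonneg hr0.le (q-1)
    have := Real.rpow_nonneg (by linarith : (0:ℝ) ≤ lam/2) (1-q)
    positivity
  refine ⟨2*(9*q + q * r^(q-1) * (lam/2)^(1-q)) + 1, by linarith, ?_⟩
  set a : ℝ := 2*(9*q + q * r^(q-1) * (lam/2)^(1-q)) + 1 with hadef
  have ha0 : 0 < a := by rw [hadef]; linarith
  intro G hGsm hGanti hG01 hGd z hz
  rw [hneg] at hGsm hGanti hG01
  rw [hneg]
  have hGc : ContinuousOn G (Icc (-(lam/2)) (lam/2)) := hGsm.continuousOn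
  obtain ⟨hz1, hz2⟩ := abs_lt.mp hz
  have hzabs : z ≤ |z| := le_abs_self z
  have hzabs' : -|z| ≤ z := neg_abs_le z
  have hgz0 : 0 < lam/2 - |z| := by linarith
  have hrhs : 0 < a * (lam/2 - |z|) ^ (q-1) :=
    mul_pos ha0 (Real.rpow_pos_of_pos hgz0 _)
  set V : ℝ → ℝ := fun y =>
    Real.exp (-(∫ t in (-(lam/2))..(lam/2), q * (max (y + t) 0) ^ (q-1) * G t)) with hVdef
  show -(deriv V z) ≤ a * (lam/2 - |z|) ^ (q-1)
  by_cases hdiff : DifferentiableAt ℝ V z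
  · have hd : HasDerivAt V (deriv V z) z := hdiff.hasDerivAt
    have htend : Tendsto (slope V z) (𝓝[>] z) (𝓝 (deriv V z)) :=
      (hasDerivAt_iff_tendsto_slope.mp hd).mono_left
        (nhdsWithin_mono z (fun y (hy : z < y) => (by simp [ne_of_gt hy] : y ∈ {z}ᶜ)))
    set h₀ : ℝ := min ((lam/2 - |z|)/8) (r/4) with hh₀def
    have hh₀0 : 0 < h₀ := lt_min (by linarith) (by linarith)
    have hmem : Ioo z (z + h₀) ∈ 𝓝[>] z :=
      Ioo_mem_nhdsGT_of_mem ⟨le_rfl, by linarith⟩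
    have hkey : ∀ᶠ y in 𝓝[>] z, -(a * (lam/2 - |z|) ^ (q-1)) ≤ slope V z y := by
      filter_upwards [hmem] with y hy
      obtain ⟨hy1, hy2⟩ := hy
      have hh0 : 0 < y - z := by linarith
      have hh1 : 8 * (y - z) ≤ lam/2 - |z| := by
        have : y - z < h₀ := by linarith
        have := min_le_left ((lam/2 - |z|)/8) (r/4)
        rw [hh₀def] at *
        linarith [this]
      have hh2 : 4 * (y - z) ≤ r := by
        have : y - z < h₀ := by linarith
        have := min_le_right ((lam/2 - |z|)/8) (r/4)
        linarith [this]
      have hyabs : |y| < lam/2 := by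
        rw [abs_lt]
        constructor
        · linarith
        · nlinarith [abs_nonneg z]
      -- the two representations
      have hWz := W_repr hq0 hq1 hlam hGc hG01 hz
      have hWy := W_repr hq0 hq1 hlam hGc hG01 hyabs
      have hks := key_step hq0 hq1 hlam hr0 hr1 hrlam hrq (le_of_eq hadef.symm)
        hGsm hGanti hG01 hGd hz hh0 hh1 hh2
      simp only [show z + (y - z) = y from by ring] at hks
      obtain ⟨hks1, hks2⟩ := hks
      rw [← hWy, ← hWz] at hks1 hks2
      -- exponential step
      have hWznn : 0 ≤ ∫ t in (-(lam/2))..(lam/2), q * (max (z + t) 0) ^ (q-1) * G t := by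
        apply intervalIntegral.integral_nonneg (by linarith)
        intro t ht
        have hG0 := (hG01 t ht).1
        have : (0:ℝ) ≤ (max (z + t) 0) ^ (q-1) := Real.rpow_nonneg (le_max_right _ _) _
        positivity
      set Wz : ℝ := ∫ t in (-(lam/2))..(lam/2), q * (max (z + t) 0) ^ (q-1) * G t with hWzdef
      set Wy : ℝ := ∫ t in (-(lam/2))..(lam/2), q * (max (y + t) 0) ^ (q-1) * G t with hWydef
      have hVz : V z = Real.exp (-Wz) := rfl
      have hVy : V y = Real.exp (-Wy) := rfl
      have hexp : Real.exp (-Wz) - Real.exp (-Wy) ≤ Wy - Wz := by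
        have h1 : (Wz - Wy) + 1 ≤ Real.exp (Wz - Wy) := Real.add_one_le_exp _
        have h2 : Real.exp (-Wy) = Real.exp (-Wz) * Real.exp (Wz - Wy) := by
          rw [← Real.exp_add]
          congr 1
          ring
        have h3 : Real.exp (-Wz) ≤ 1 := Real.exp_le_one_iff.mpr (by linarith)
        have h4 : 0 < Real.exp (-Wz) := Real.exp_pos _
        calc Real.exp (-Wz) - Real.exp (-Wy)
            = Real.exp (-Wz) * (1 - Real.exp (Wz - Wy)) := by rw [h2]; ring
          _ ≤ Real.exp (-Wz) * (Wy - Wz) := by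
              apply mul_le_mul_of_nonneg_left _ h4.le
              linarith
          _ ≤ 1 * (Wy - Wz) := mul_le_mul_of_nonneg_right h3 (by linarith)
          _ = Wy - Wz := one_mul _
      -- conclude slope bound
      have hslope : slope V z y = (V y - V z) / (y - z) := slope_def_field V z y
      rw [hslope, hVy, hVz]
      rw [le_div_iff₀ hh0]
      have : Real.exp (-Wz) - Real.exp (-Wy) ≤ a * (lam/2 - |z|) ^ (q-1) * (y - z) := by
        calc Real.exp (-Wz) - Real.exp (-Wy) ≤ Wy - Wz := hexp
          _ ≤ a * (lam/2 - |z|) ^ (q-1) * (y - z) := hks2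
      linarith
    have := ge_of_tendsto htend hkey
    linarith
  · rw [deriv_zero_of_not_differentiableAt hdiff]
    rw [neg_zero]
    exact hrhs.le
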